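/- Fix distinct sites x≠y in the grid U with τ·R_G(x,y) > 0, where τ = γ²/β and R_G(x,y) = G_U(x,x)+G_U(y,y)−2G_U(x,y). Let (h_ℓ)_{ℓ≥1} be positive fields on U with h_ℓ(x) > h_ℓ(y) for every ℓ, and set δ_ℓ = log h_ℓ(x) − log h_ℓ(y). If δ_ℓ/√(τR_G(x,y)) → ∞, then under the sample-wise GCh gate, Pr(h̃_ℓ(x) > h̃_ℓ(y)) → 1 as ℓ → ∞, where h̃_ℓ = ξ^sw_γ ⊙ h_ℓ; whereas under inverted dropout with keep probability q, Pr((m_q ⊙ h_ℓ)(x) > (m_q ⊙ h_ℓ)(y)) = q for every ℓ. -/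

import Mathlib

open MeasureTheory Matrix Real Filter

noncomputable section
/-- A point of the `H × W` feature grid `U = {1,…,H} × {1,…,W}` (0-indexed model). -/
abbrev GridPt (H W : ℕ) := Fin H × Fin W

/-- Embedding of the grid into `ℤ × ℤ` with coordinates in `{1,…,H} × {1,…,W}`. -/
def gridZ {H W : ℕ} (x : GridPt H W) : ℤ × ℤ := ((x.1 : ℤ) + 1, (x.2 : ℤ) + 1)

/-- Nearest-neighbor adjacency on `ℤ × ℤ`: `ℓ¹`-distance one. -/
def adjZ (p q : ℤ × ℤ) : Bool := |p.1 - q.1| + |p.2 - q.2| == 1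

/-- The Dirichlet Laplacian matrix on the grid `U` with edge weights `c` and zero
(auxiliary Dirichlet) boundary: `(L_U φ)(x) = ∑_{y : {x,y} ∈ E} c_{xy} (φ(x) − φ̄(y))`
where `φ̄` extends `φ` by zero outside `U`. -/
def dirichletLap (H W : ℕ) (c : ℤ × ℤ → ℤ × ℤ → ℝ) :
    Matrix (GridPt H W) (GridPt H W) ℝ := fun x y =>
  if x = y then
    ((([((1 : ℤ), (0 : ℤ)), (-1, 0), (0, 1), (0, -1)] : List (ℤ × ℤ)).map
      (fun d => c (gridZ x) (gridZ x + d))).sum)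
  else if adjZ (gridZ x) (gridZ y) then -c (gridZ x) (gridZ y) else 0
/-- `ψ` is a centered Gaussian random vector with covariance matrix `C` under `P`:
every linear functional of `ψ` is a centered real Gaussian with the induced variance. -/
def IsCenteredGaussianField {ι : Type*} [Fintype ι] {Ω : Type*} [MeasurableSpace Ω]
    (P : MeasureTheory.Measure Ω) (ψ : Ω → ι → ℝ) (C : Matrix ι ι ℝ) : Prop :=
  ∀ a : ι → ℝ,
    MeasureTheory.Measure.map (fun ω => ∑ x, a x * ψ ω x) P =
      ProbabilityTheory.gaussianReal 0 (∑ x, ∑ y, a x * C x y * a y).toNNReal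

/-- Sample-wise mean-one gate `ξ^sw_γ(x) = exp(γψ(x)) / ((1/|U|) ∑_y exp(γψ(y)))`. -/
def swGate {ι : Type*} [Fintype ι] (γ : ℝ) (ψ : ι → ℝ) (x : ι) : ℝ :=
  Real.exp (γ * ψ x) / ((∑ y : ι, Real.exp (γ * ψ y)) / (Fintype.card ι : ℝ))
/-- Inverted-dropout mask `m_q(x) = b(x)/q` built from a Boolean keep pattern `ω`. -/
def maskD {ι : Type*} (q : ℝ) (ω : ι → Bool) (x : ι) : ℝ :=
  (if ω x then (1 : ℝ) else 0) / q

/-- The law of i.i.d. `Bernoulli(q)` keep variables indexed by `ι`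
(the canonical product measure, i.e. i.i.d. coordinates). -/
def bernoulliPi (ι : Type*) [Fintype ι] (q : ℝ) (hq : q ≤ 1) :
    MeasureTheory.Measure (ι → Bool) :=
  MeasureTheory.Measure.pi fun _ =>
    (PMF.bernoulli (Real.toNNReal q) (Real.toNNReal_le_one.mpr hq)).toMeasure

/-! ### Auxiliary lemmas -/

lemma adjZ_symm (p q : ℤ × ℤ) : adjZ p q = adjZ q p := by
  simp only [adjZ]
  rw [abs_sub_comm p.1 q.1, abs_sub_comm p.2 q.2]

lemma dirichletLap_isSymm {H W : ℕ} (c : ℤ × ℤ → ℤ × ℤ → ℝ)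
    (hsym : ∀ p q : ℤ × ℤ, c p q = c q p) : (dirichletLap H W c).IsSymm := by
  ext i j
  simp only [Matrix.transpose_apply, dirichletLap]
  by_cases h : i = j
  · subst h; simp
  · rw [if_neg h, if_neg (Ne.symm h), adjZ_symm, hsym (gridZ j) (gridZ i)]

lemma dirichletLap_inv_symm {H W : ℕ} (c : ℤ × ℤ → ℤ × ℤ → ℝ)
    (hsym : ∀ p q : ℤ × ℤ, c p q = c q p) (x y : GridPt H W) :
    (dirichletLap H W c)⁻¹ x y = (dirichletLap H W c)⁻¹ y x := by
  have h := dirichletLap_isSymm (H := H) (W := W) c hsym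
  have h2 : ((dirichletLap H W c)⁻¹)ᵀ = (dirichletLap H W c)⁻¹ := by
    rw [Matrix.transpose_nonsing_inv, h]
  conv_rhs => rw [← h2]
  rfl

lemma pair_sum {ι : Type*} [Fintype ι] [DecidableEq ι] {x y : ι} (hne : x ≠ y)
    (γ : ℝ) (g : ι → ℝ) :
    ∑ z, (if z = x then γ else if z = y then -γ else 0) * g z = γ * g x - γ * g y := by
  rw [← Finset.sum_subset (Finset.subset_univ ({x, y} : Finset ι))]
  · rw [Finset.sum_pair hne]
    simp [hne, Ne.symm hne]
    ring
  · intro z _ hz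
    simp only [Finset.mem_insert, Finset.mem_singleton, not_or] at hz
    simp [hz.1, hz.2]

lemma pair_sum' {ι : Type*} [Fintype ι] [DecidableEq ι] {x y : ι} (hne : x ≠ y)
    (γ : ℝ) (g : ι → ℝ) :
    ∑ z, g z * (if z = x then γ else if z = y then -γ else 0) = γ * g x - γ * g y := by
  have := pair_sum hne γ g
  rw [← this]
  exact Finset.sum_congr rfl fun z _ => mul_comm _ _

lemma variance_eq {H W : ℕ}
    (c : ℤ × ℤ → ℤ × ℤ → ℝ)
    (hsym : ∀ p q : ℤ × ℤ, c p q = c q p)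
    (β : ℝ) (hβ : 0 < β) (γ : ℝ)
    (x y : GridPt H W) (hne : x ≠ y) :
    ∑ i, ∑ j, (if i = x then γ else if i = y then -γ else 0) *
        (β⁻¹ • (dirichletLap H W c)⁻¹) i j *
        (if j = x then γ else if j = y then -γ else 0) =
      (γ ^ 2 / β) *
      ((dirichletLap H W c)⁻¹ x x + (dirichletLap H W c)⁻¹ y y -
        2 * (dirichletLap H W c)⁻¹ x y) := by
  classical
  set G := (dirichletLap H W c)⁻¹ with hG
  set a : GridPt H W → ℝ := fun z => if z = x then γ else if z = y then -γ else 0 with ha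
  have inner : ∀ i : GridPt H W, ∑ j, a i * (β⁻¹ • G) i j * a j
      = a i * (γ * (β⁻¹ * G i x) - γ * (β⁻¹ * G i y)) := by
    intro i
    have h1 := pair_sum' (ι := GridPt H W) hne γ (fun j => a i * (β⁻¹ • G) i j)
    simp only [Matrix.smul_apply, smul_eq_mul] at h1 ⊢
    rw [h1]; ring
  simp only [ha] at inner
  rw [Finset.sum_congr rfl (fun i _ => inner i)]
  rw [pair_sum (ι := GridPt H W) hne γ
    (fun i => γ * (β⁻¹ * G i x) - γ * (β⁻¹ * G i y))]
  have hGsym : G y x = G x y := dirichletLap_inv_symm c hsym y x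
  rw [hGsym]
  field_simp
  ring

lemma bernoulliPi_keep {ι : Type*} [Fintype ι] (q : ℝ) (hq1 : q ≤ 1) (x : ι) :
    bernoulliPi ι q hq1 {ω : ι → Bool | ω x = true} = ENNReal.ofReal q := by
  classical
  have hset : {ω : ι → Bool | ω x = true} =
      Set.univ.pi (fun i => if i = x then ({true} : Set Bool) else Set.univ) := by
    ext ω
    simp only [Set.mem_setOf_eq, Set.mem_pi, Set.mem_univ, forall_true_left]
    constructor
    · intro h i; by_cases hi : i = x <;> simp [hi, h]
    · intro h; have := h x; simpa using this
  rw [bernoulliPi, hset, MeasureTheory.Measure.pi_pi]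
  have : ∀ i : ι, (PMF.bernoulli (Real.toNNReal q) (Real.toNNReal_le_one.mpr hq1)).toMeasure
      (if i = x then ({true} : Set Bool) else Set.univ) =
      if i = x then ENNReal.ofReal q else 1 := by
    intro i
    by_cases hi : i = x
    · simp only [hi, if_true, if_pos rfl]
      rw [PMF.toMeasure_apply_singleton _ _ (measurableSet_singleton true)]
      rfl
    · rw [if_neg hi, if_neg hi, measure_univ]
  simp_rw [this]
  simp


/-- Margin-growth regime: the sample-wise GCh gate strengthens while
inverted dropout saturates. If `δ_ℓ/√(τ R_G(x,y)) → ∞` where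
`δ_ℓ = log h_ℓ(x) − log h_ℓ(y)`, `τ = γ²/β`, and `τ R_G(x,y) > 0`, then
`Pr(h̃_ℓ(x) > h̃_ℓ(y)) → 1` under the sample-wise gate, whereas under inverted dropout
`Pr((m_q ⊙ h_ℓ)(x) > (m_q ⊙ h_ℓ)(y)) = q` for every `ℓ`. -/
theorem margin_growth_gch_vs_dropout {H W : ℕ}
    (c : ℤ × ℤ → ℤ × ℤ → ℝ)
    (hsym : ∀ p q : ℤ × ℤ, c p q = c q p)
    (hpos : ∀ p q : ℤ × ℤ, adjZ p q → 0 < c p q)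
    (β : ℝ) (hβ : 0 < β) (γ : ℝ)
    {Ω : Type*} [MeasurableSpace Ω] (P : Measure Ω) [IsProbabilityMeasure P]
    (ψ : Ω → GridPt H W → ℝ) (hψ : Measurable ψ)
    (hgauss : IsCenteredGaussianField P ψ (β⁻¹ • (dirichletLap H W c)⁻¹))
    (x y : GridPt H W) (hne : x ≠ y)
    (hvar : 0 < (γ ^ 2 / β) *
      ((dirichletLap H W c)⁻¹ x x + (dirichletLap H W c)⁻¹ y y -
        2 * (dirichletLap H W c)⁻¹ x y))
    (hseq : ℕ → GridPt H W → ℝ) (hposf : ∀ (ℓ : ℕ) (z : GridPt H W), 0 < hseq ℓ z)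
    (hgt : ∀ ℓ : ℕ, hseq ℓ y < hseq ℓ x)
    (hδ : Tendsto
      (fun ℓ : ℕ => (Real.log (hseq ℓ x) - Real.log (hseq ℓ y)) /
        Real.sqrt ((γ ^ 2 / β) *
          ((dirichletLap H W c)⁻¹ x x + (dirichletLap H W c)⁻¹ y y -
            2 * (dirichletLap H W c)⁻¹ x y)))
      atTop atTop)
    (q : ℝ) (hq0 : 0 < q) (hq1 : q ≤ 1) :
    Tendsto
      (fun ℓ : ℕ =>
        (P {ω | swGate γ (ψ ω) y * hseq ℓ y < swGate γ (ψ ω) x * hseq ℓ x}).toReal)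
      atTop (nhds 1) ∧
    (∀ ℓ : ℕ,
      bernoulliPi (GridPt H W) q hq1
          {ω : GridPt H W → Bool | maskD q ω y * hseq ℓ y < maskD q ω x * hseq ℓ x} =
        ENNReal.ofReal q) := by
  classical
  have hnonempty : Nonempty (GridPt H W) := ⟨x⟩
  set v : ℝ := (γ ^ 2 / β) *
      ((dirichletLap H W c)⁻¹ x x + (dirichletLap H W c)⁻¹ y y -
        2 * (dirichletLap H W c)⁻¹ x y) with hv
  set δ : ℕ → ℝ := fun ℓ => Real.log (hseq ℓ x) - Real.log (hseq ℓ y) with hδdef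
  set a : GridPt H W → ℝ := fun z => if z = x then γ else if z = y then -γ else 0 with ha
  set f : Ω → ℝ := fun ω => ∑ z, a z * ψ ω z with hfdef
  have hfval : ∀ ω, f ω = γ * ψ ω x - γ * ψ ω y := fun ω =>
    pair_sum (ι := GridPt H W) hne γ (ψ ω)
  have hf : Measurable f :=
    Finset.measurable_sum _ fun z _ => ((measurable_pi_apply z).comp hψ).const_mul (a z)
  set μ : Measure ℝ := ProbabilityTheory.gaussianReal 0 v.toNNReal with hμ
  have hmap : Measure.map f P = μ := by
    rw [hμ, hfdef]
    have := hgauss a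
    rw [this]
    congr 1
    exact congrArg Real.toNNReal (variance_eq c hsym β hβ γ x y hne)
  constructor
  · -- sample-wise gate part
    have hPeq : ∀ ℓ : ℕ,
        P {ω | swGate γ (ψ ω) y * hseq ℓ y < swGate γ (ψ ω) x * hseq ℓ x} =
          μ (Set.Ioi (-(δ ℓ))) := by
      intro ℓ
      have hset : {ω | swGate γ (ψ ω) y * hseq ℓ y < swGate γ (ψ ω) x * hseq ℓ x} =
          f ⁻¹' Set.Ioi (-(δ ℓ)) := by
        ext ω
        simp only [Set.mem_setOf_eq, Set.mem_preimage, Set.mem_Ioi]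
        have hcard : (0 : ℝ) < (Fintype.card (GridPt H W) : ℝ) := by
          exact_mod_cast Fintype.card_pos
        have hS : 0 < (∑ z : GridPt H W, Real.exp (γ * ψ ω z)) /
            (Fintype.card (GridPt H W) : ℝ) :=
          div_pos (Finset.sum_pos (fun z _ => Real.exp_pos _) Finset.univ_nonempty) hcard
        rw [hfval ω]
        unfold swGate
        rw [div_mul_eq_mul_div, div_mul_eq_mul_div, div_lt_div_iff₀ hS hS, mul_lt_mul_iff_of_pos_right hS]
        rw [show Real.exp (γ * ψ ω y) * hseq ℓ y =
          Real.exp (γ * ψ ω y + Real.log (hseq ℓ y)) by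
            rw [Real.exp_add, Real.exp_log (hposf ℓ y)]]
        rw [show Real.exp (γ * ψ ω x) * hseq ℓ x =
          Real.exp (γ * ψ ω x + Real.log (hseq ℓ x)) by
            rw [Real.exp_add, Real.exp_log (hposf ℓ x)]]
        rw [Real.exp_lt_exp, hδdef]
        constructor <;> intro h <;> simp only at h ⊢ <;> linarith
      rw [hset, ← Measure.map_apply hf measurableSet_Ioi, hmap]
    have hsqrt : 0 < Real.sqrt v := Real.sqrt_pos.mpr hvar
    have hδtop : Tendsto δ atTop atTop := by
      have h1 : Tendsto (fun ℓ => (δ ℓ / Real.sqrt v) * Real.sqrt v) atTop atTop :=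
        Tendsto.atTop_mul_const hsqrt hδ
      refine h1.congr fun ℓ => ?_
      field_simp
    have hb : Tendsto (fun ℓ => -(δ ℓ) + 1) atTop atBot :=
      tendsto_atBot_add_const_right _ 1 (tendsto_neg_atBot_iff.mpr hδtop)
    have hlow : Tendsto (fun ℓ => μ (Set.Ici (-(δ ℓ) + 1))) atTop (nhds 1) := by
      have := (tendsto_measure_Ici_atBot μ).comp hb
      rwa [measure_univ] at this
    have hmain : Tendsto (fun ℓ => μ (Set.Ioi (-(δ ℓ)))) atTop (nhds 1) := by
      refine tendsto_of_tendsto_of_tendsto_of_le_of_le hlow tendsto_const_nhds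
        (fun ℓ => measure_mono fun z hz => ?_) (fun ℓ => prob_le_one)
      simp only [Set.mem_Ici] at hz
      simp only [Set.mem_Ioi]
      linarith
    have htr : Tendsto (fun ℓ => (μ (Set.Ioi (-(δ ℓ)))).toReal) atTop (nhds 1) := by
      have h2 := (ENNReal.tendsto_toReal ENNReal.one_ne_top).comp hmain
      exact h2
    exact htr.congr fun ℓ => (congrArg ENNReal.toReal (hPeq ℓ)).symm
  · -- dropout part
    intro ℓ
    have hset : {ω : GridPt H W → Bool | maskD q ω y * hseq ℓ y < maskD q ω x * hseq ℓ x} =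
        {ω : GridPt H W → Bool | ω x = true} := by
      ext ω
      simp only [Set.mem_setOf_eq, maskD]
      have h1 := hposf ℓ x
      have h2 := hposf ℓ y
      have h3 := hgt ℓ
      have h4 : 0 < q⁻¹ := by positivity
      cases hx' : ω x <;> cases hy' : ω y <;> simp [hx', hy'] <;> nlinarith
    rw [hset, bernoulliPi_keep]
end
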